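/- Let n ≥ 1 and let z₀, z₁, …, z_n, w₁, …, w_n ∈ 𝔻 satisfy d(z_k, w_k) ≤ (1 − d(z_k, z₀))(1 − d(w_k, z₀))/(4n) for k = 1,…,n, where d is the pseudo-hyperbolic distance. Then the function f(ζ) = ∏_{k=0}^{n} (ζ − z_k)/(1 − conj(z_k) ζ) · (∏_{k=1}^{n} (ζ − w_k)/(1 − conj(w_k) ζ))^{−1} restricted to 𝕋 is a sense-preserving circle homeomorphism. Furthermore, if the inequality is strict for some k, then f is a circle diffeomorphism. -/

import Mathlib

open Complex MeasureTheory intervalIntegral ComplexConjugate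

/-- A sense-preserving homeomorphism of the unit circle, described via a continuous
strictly increasing degree-one lift. -/
def CirclePosHomeo (f : ℂ → ℂ) : Prop :=
  ∃ F : ℝ → ℝ, Continuous F ∧ StrictMono F ∧
    (∀ θ, F (θ + 2 * Real.pi) = F θ + 2 * Real.pi) ∧
    ∀ θ : ℝ, f (Complex.exp (θ * Complex.I)) = Complex.exp (F θ * Complex.I)

/-- A sense-preserving diffeomorphism of the unit circle, described via a `C¹`
degree-one lift with everywhere positive derivative. -/
def CirclePosDiffeo (f : ℂ → ℂ) : Prop :=
  ∃ F : ℝ → ℝ, ContDiff ℝ 1 F ∧ (∀ θ, 0 < deriv F θ) ∧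
    (∀ θ, F (θ + 2 * Real.pi) = F θ + 2 * Real.pi) ∧
    ∀ θ : ℝ, f (Complex.exp (θ * Complex.I)) = Complex.exp (F θ * Complex.I)

/-- The pseudo-hyperbolic distance on the unit disk. -/
noncomputable def pseudoDist (z w : ℂ) : ℝ := ‖(z - w) / (1 - z * conj w)‖

lemma exp_arctan_ratio {u : ℂ} (hu : 0 < u.re) :
    Complex.exp ((Real.arctan (u.im / u.re) : ℝ) * Complex.I) = u / (‖u‖ : ℂ) := by
  have hsq : ‖u‖ ^ 2 = u.re ^ 2 + u.im ^ 2 := by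
    rw [Complex.sq_norm, Complex.normSq_apply]; ring
  have hnpos : 0 < ‖u‖ := by
    have : u ≠ 0 := fun h => by simp [h] at hu
    simpa [norm_pos_iff] using this
  have hsqrt : Real.sqrt (1 + (u.im / u.re) ^ 2) = ‖u‖ / u.re := by
    have h1 : 1 + (u.im / u.re) ^ 2 = (‖u‖ / u.re) ^ 2 := by
      field_simp
      linarith [hsq]
    rw [h1, Real.sqrt_sq (by positivity)]
  have hcos : Real.cos (Real.arctan (u.im / u.re)) = u.re / ‖u‖ := by
    rw [Real.cos_arctan, hsqrt]
    field_simp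
  have hsin : Real.sin (Real.arctan (u.im / u.re)) = u.im / ‖u‖ := by
    rw [Real.sin_arctan, hsqrt]
    field_simp
  rw [Complex.exp_mul_I, ← Complex.ofReal_cos, ← Complex.ofReal_sin, hcos, hsin]
  rw [← Complex.re_add_im u]
  push_cast
  field_simp
  congr 1
  simp
  rw [mul_comm]; exact Complex.re_add_im u

namespace BQAux
noncomputable def G (a : ℂ) (θ : ℝ) : ℂ := 1 - conj a * Complex.exp (θ * Complex.I)
noncomputable def blift (a : ℂ) (θ : ℝ) : ℝ :=
  θ - 2 * Real.arctan ((G a θ).im / (G a θ).re)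
noncomputable def pker (a : ℂ) (θ : ℝ) : ℝ := (1 - ‖a‖ ^ 2) / ‖G a θ‖ ^ 2

lemma norm_exp_mul_I (θ : ℝ) : ‖Complex.exp (θ * Complex.I)‖ = 1 := by
  simp [Complex.norm_exp_ofReal_mul_I θ]

lemma re_G_pos {a : ℂ} (ha : ‖a‖ < 1) (θ : ℝ) : 0 < (G a θ).re := by
  have h1 : (conj a * Complex.exp (θ * Complex.I)).re ≤ ‖conj a * Complex.exp (θ * Complex.I)‖ :=
    Complex.re_le_norm _
  have h2 : ‖conj a * Complex.exp (θ * Complex.I)‖ = ‖a‖ := by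
    rw [norm_mul, norm_exp_mul_I, mul_one]; simp
  have h3 : (G a θ).re = 1 - (conj a * Complex.exp (θ * Complex.I)).re := by simp [G]
  rw [h3]; linarith [h1.trans_eq h2]

lemma G_ne_zero {a : ℂ} (ha : ‖a‖ < 1) (θ : ℝ) : G a θ ≠ 0 := by
  intro h
  have := re_G_pos ha θ
  rw [h] at this; simp at this

lemma exp_blift {a : ℂ} (ha : ‖a‖ < 1) (θ : ℝ) :
    Complex.exp ((blift a θ : ℝ) * Complex.I)
      = (Complex.exp (θ * Complex.I) - a) / G a θ := by
  have hG := G_ne_zero ha θ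
  have hre := re_G_pos ha θ
  have hα : Complex.exp ((Real.arctan ((G a θ).im / (G a θ).re) : ℝ) * Complex.I)
      = G a θ / (‖G a θ‖ : ℂ) := exp_arctan_ratio hre
  have hnorm : ((‖G a θ‖ : ℝ) : ℂ) ≠ 0 := by
    simpa using fun h => hG (by simpa [norm_eq_zero] using h)
  have hmc : ((‖G a θ‖ : ℝ) : ℂ) ^ 2 = G a θ * conj (G a θ) := by
    rw [← Complex.ofReal_pow, ← Complex.normSq_eq_norm_sq, Complex.mul_conj]
  have h1 : Complex.exp (θ * Complex.I) * conj (G a θ) = Complex.exp (θ * Complex.I) - a := by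
    unfold G
    rw [map_sub, map_one, map_mul, Complex.conj_conj, ← Complex.exp_conj]
    have : conj ((θ : ℂ) * Complex.I) = -(θ * Complex.I) := by
      simp [Complex.conj_I]
    rw [this, mul_sub, mul_one, ← mul_assoc, mul_comm (Complex.exp _) a, mul_assoc,
      ← Complex.exp_add]
    simp
  set α := Real.arctan ((G a θ).im / (G a θ).re) with hαdef
  have hsplit : ((blift a θ : ℝ) : ℂ) * Complex.I
      = (θ : ℂ) * Complex.I - ((α : ℂ) * Complex.I + (α : ℂ) * Complex.I) := by
    rw [show blift a θ = θ - 2 * α from rfl, Complex.ofReal_sub, Complex.ofReal_mul,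
      Complex.ofReal_ofNat]
    ring
  rw [hsplit, Complex.exp_sub, Complex.exp_add, hα]
  field_simp
  linear_combination G a θ * h1 + Complex.exp ((θ:ℂ) * Complex.I) * hmc
end BQAux

namespace BQAux

lemma hasDerivAt_re_of {f : ℝ → ℂ} {f' : ℂ} {x : ℝ} (h : HasDerivAt f f' x) :
    HasDerivAt (fun t => (f t).re) f'.re x := by
  exact (Complex.reCLM.hasFDerivAt.comp_hasDerivAt x h)

lemma hasDerivAt_im_of {f : ℝ → ℂ} {f' : ℂ} {x : ℝ} (h : HasDerivAt f f' x) :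
    HasDerivAt (fun t => (f t).im) f'.im x := by
  exact (Complex.imCLM.hasFDerivAt.comp_hasDerivAt x h)

lemma hasDerivAt_G (a : ℂ) (θ : ℝ) :
    HasDerivAt (G a) ((G a θ - 1) * Complex.I) θ := by
  have h0 : HasDerivAt (fun t : ℝ => (t : ℂ) * Complex.I) Complex.I θ := by
    simpa using (Complex.ofRealCLM.hasDerivAt.mul_const Complex.I)
  have h1 : HasDerivAt (fun t : ℝ => Complex.exp ((t : ℂ) * Complex.I))
      (Complex.exp ((θ : ℂ) * Complex.I) * Complex.I) θ := by
    simpa using h0.cexp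
  have h2 := (h1.const_mul (conj a)).const_sub 1
  refine h2.congr_deriv ?_
  simp only [G]; ring

lemma sq_norm_G (a : ℂ) (θ : ℝ) : ‖G a θ‖ ^ 2 = (G a θ).re ^ 2 + (G a θ).im ^ 2 := by
  rw [Complex.sq_norm, Complex.normSq_apply]; ring

lemma key_G (a : ℂ) (θ : ℝ) :
    2 * (G a θ).re - ((G a θ).re ^ 2 + (G a θ).im ^ 2) = 1 - ‖a‖ ^ 2 := by
  have htrig : Real.sin θ ^ 2 + Real.cos θ ^ 2 = 1 := Real.sin_sq_add_cos_sq θ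
  have hna : ‖a‖ ^ 2 = a.re ^ 2 + a.im ^ 2 := by
    rw [Complex.sq_norm, Complex.normSq_apply]; ring
  simp only [G, Complex.sub_re, Complex.sub_im, Complex.one_re, Complex.one_im,
    Complex.mul_re, Complex.mul_im, Complex.conj_re, Complex.conj_im,
    Complex.exp_ofReal_mul_I_re, Complex.exp_ofReal_mul_I_im, hna]
  nlinarith [htrig]

lemma hasDerivAt_blift {a : ℂ} (ha : ‖a‖ < 1) (θ : ℝ) :
    HasDerivAt (blift a) (pker a θ) θ := by
  have hre := re_G_pos ha θ
  have hG' := hasDerivAt_G a θ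
  have hR : HasDerivAt (fun t => (G a t).re) (((G a θ - 1) * Complex.I).re) θ :=
    hasDerivAt_re_of hG'
  have hI : HasDerivAt (fun t => (G a t).im) (((G a θ - 1) * Complex.I).im) θ :=
    hasDerivAt_im_of hG'
  have hv : HasDerivAt (fun t => (G a t).im / (G a t).re)
      ((((G a θ - 1) * Complex.I).im * (G a θ).re -
        (G a θ).im * ((G a θ - 1) * Complex.I).re) / (G a θ).re ^ 2) θ :=
    hI.div hR (ne_of_gt hre)
  have harc := hv.arctan
  have hb := (hasDerivAt_id θ).sub (harc.const_mul 2)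
  refine hb.congr_deriv ?_
  have hsum : 0 < (G a θ).re ^ 2 + (G a θ).im ^ 2 := by positivity
  have hIre : ((G a θ - 1) * Complex.I).re = -(G a θ).im := by
    simp [Complex.mul_re, Complex.mul_im]
  have hIim : ((G a θ - 1) * Complex.I).im = (G a θ).re - 1 := by
    simp [Complex.mul_re, Complex.mul_im]
  rw [hIre, hIim, pker, sq_norm_G, ← key_G a θ]
  field_simp
  ring

end BQAux


namespace BQAux

lemma one_sub_ne_zero {u : ℂ} (h : ‖u‖ < 1) : (1 : ℂ) - u ≠ 0 := by
  intro hc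
  have : u = 1 := by linear_combination -hc
  rw [this] at h; simp at h

lemma denom_ne_zero {z w : ℂ} (hz : ‖z‖ < 1) (hw : ‖w‖ < 1) :
    (1 : ℂ) - z * conj w ≠ 0 := by
  apply one_sub_ne_zero
  rw [norm_mul]
  calc ‖z‖ * ‖conj w‖ = ‖z‖ * ‖w‖ := by rw [RCLike.norm_conj]
  _ < 1 := by nlinarith [norm_nonneg z, norm_nonneg w]

lemma norm_identity (z w : ℂ) :
    ‖1 - z * conj w‖ ^ 2 = ‖z - w‖ ^ 2 + (1 - ‖z‖ ^ 2) * (1 - ‖w‖ ^ 2) := by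
  simp only [Complex.sq_norm, Complex.normSq_apply,
    Complex.sub_re, Complex.sub_im, Complex.one_re, Complex.one_im,
    Complex.mul_re, Complex.mul_im, Complex.conj_re, Complex.conj_im]
  ring

lemma pseudoDist_nonneg (z w : ℂ) : 0 ≤ pseudoDist z w := norm_nonneg _

lemma pseudoDist_comm (z w : ℂ) : pseudoDist z w = pseudoDist w z := by
  unfold pseudoDist
  rw [norm_div, norm_div]
  congr 1
  · rw [← norm_neg]; congr 1; ring
  · have : (1 : ℂ) - w * conj z = conj (1 - z * conj w) := by
      rw [map_sub, map_one, map_mul, Complex.conj_conj]; ring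
    rw [this, RCLike.norm_conj]

lemma pseudoDist_mul {z w : ℂ} (hz : ‖z‖ < 1) (hw : ‖w‖ < 1) :
    pseudoDist z w * ‖1 - z * conj w‖ = ‖z - w‖ := by
  have h := denom_ne_zero hz hw
  unfold pseudoDist
  rw [norm_div]
  have h0 : ‖(1:ℂ) - z * conj w‖ ≠ 0 := norm_ne_zero_iff.mpr h
  field_simp

lemma pseudoDist_lt_one {z w : ℂ} (hz : ‖z‖ < 1) (hw : ‖w‖ < 1) :
    pseudoDist z w < 1 := by
  have hne := denom_ne_zero hz hw
  have hD : 0 < ‖(1:ℂ) - z * conj w‖ := norm_pos_iff.mpr hne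
  have hid := norm_identity z w
  have hZ : 0 < 1 - ‖z‖ ^ 2 := by nlinarith [norm_nonneg z]
  have hW : 0 < 1 - ‖w‖ ^ 2 := by nlinarith [norm_nonneg w]
  unfold pseudoDist
  rw [norm_div, div_lt_one hD]
  nlinarith [norm_nonneg (z - w), hD]

end BQAux

namespace BQAux

lemma norm_G_eq {a : ℂ} (θ : ℝ) : ‖G a θ‖ = ‖Complex.exp (θ * Complex.I) - a‖ := by
  set ζ := Complex.exp (θ * Complex.I) with hζdef
  have hζ : ‖ζ‖ = 1 := norm_exp_mul_I θ
  have hcc : conj ζ * ζ = 1 := by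
    rw [mul_comm, Complex.mul_conj]
    norm_cast
    rw [Complex.normSq_eq_norm_sq, hζ]
    norm_num
  have key : conj ζ * G a θ = conj (ζ - a) := by
    simp only [G, map_sub]
    rw [mul_sub, mul_one, ← mul_assoc, mul_comm (conj ζ) (conj a), mul_assoc, hcc]
    ring
  calc ‖G a θ‖ = ‖conj ζ‖ * ‖G a θ‖ := by rw [RCLike.norm_conj, hζ, one_mul]
  _ = ‖conj ζ * G a θ‖ := (norm_mul _ _).symm
  _ = ‖conj (ζ - a)‖ := by rw [key]
  _ = ‖ζ - a‖ := RCLike.norm_conj _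

lemma pker_pos {a : ℂ} (ha : ‖a‖ < 1) (θ : ℝ) : 0 < pker a θ := by
  have h1 : 0 < 1 - ‖a‖ ^ 2 := by nlinarith [norm_nonneg a]
  have h2 : 0 < ‖G a θ‖ := norm_pos_iff.mpr (G_ne_zero ha θ)
  exact div_pos h1 (by positivity)

lemma continuous_G (a : ℂ) : Continuous (G a) := by
  unfold G; fun_prop

lemma continuous_pker {a : ℂ} (ha : ‖a‖ < 1) : Continuous (pker a) := by
  unfold pker
  apply continuous_const.div (((continuous_G a).norm).pow 2)
  intro θ
  have h2 : 0 < ‖G a θ‖ := norm_pos_iff.mpr (G_ne_zero ha θ)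
  exact pow_ne_zero 2 h2.ne'

lemma blift_period (a : ℂ) (θ : ℝ) :
    blift a (θ + 2 * Real.pi) = blift a θ + 2 * Real.pi := by
  have hG : G a (θ + 2 * Real.pi) = G a θ := by
    unfold G
    congr 1
    rw [Complex.ofReal_add, add_mul, Complex.exp_add]
    have : Complex.exp ((2 * Real.pi : ℝ) * Complex.I) = 1 := by
      push_cast
      exact Complex.exp_two_pi_mul_I
    rw [this, mul_one]
  unfold blift
  rw [hG]; ring

/-- Harnack inequality for the Poisson kernel. -/
lemma harnack {z w : ℂ} (hz : ‖z‖ < 1) (hw : ‖w‖ < 1) (θ : ℝ) :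
    (1 - pseudoDist z w) * pker z θ ≤ (1 + pseudoDist z w) * pker w θ := by
  set ζ := Complex.exp (θ * Complex.I) with hζdef
  set d := pseudoDist z w with hddef
  set D := ‖(1:ℂ) - z * conj w‖ with hDdef
  set s := ‖z - w‖ with hsdef
  set p := ‖G z θ‖ with hpdef
  set q := ‖G w θ‖ with hqdef
  set Z := 1 - ‖z‖ ^ 2 with hZdef
  set W := 1 - ‖w‖ ^ 2 with hWdef
  have hD : 0 < D := norm_pos_iff.mpr (denom_ne_zero hz hw)
  have hp : 0 < p := norm_pos_iff.mpr (G_ne_zero hz θ)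
  have hq : 0 < q := norm_pos_iff.mpr (G_ne_zero hw θ)
  have hZ : 0 < Z := by rw [hZdef]; nlinarith [norm_nonneg z, hz]
  have hW : 0 < W := by rw [hWdef]; nlinarith [norm_nonneg w, hw]
  have hd0 : 0 ≤ d := pseudoDist_nonneg z w
  have hd1 : d < 1 := pseudoDist_lt_one hz hw
  have hdD : d * D = s := pseudoDist_mul hz hw
  have f1 : D ^ 2 = s ^ 2 + Z * W := norm_identity z w
  have hiden : (ζ - z) * (1 - conj w * w) =
      (ζ - w) * (1 - conj w * z) - (z - w) * (1 - conj w * ζ) := by ring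
  have hWC : (1 : ℂ) - conj w * w = ((W : ℝ) : ℂ) := by
    rw [hWdef]
    push_cast
    rw [mul_comm (conj w) w, Complex.mul_conj]
    norm_cast
    rw [Complex.normSq_eq_norm_sq]
  have hp' : p = ‖ζ - z‖ := norm_G_eq θ
  have hq' : q = ‖ζ - w‖ := norm_G_eq θ
  have hnormWC : ‖(ζ - z) * (1 - conj w * w)‖ = p * W := by
    rw [norm_mul, hWC, Complex.norm_real, Real.norm_of_nonneg hW.le, hp']
  have hn1 : ‖(ζ - w) * (1 - conj w * z)‖ = q * D := by
    rw [norm_mul, hq']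
    congr 1
    rw [hDdef]
    congr 1
    ring
  have hn2 : ‖(z - w) * (1 - conj w * ζ)‖ = s * q := by
    have hGq : (1 : ℂ) - conj w * ζ = G w θ := rfl
    rw [norm_mul, hGq, ← hsdef, ← hqdef]
  have f2 : q * D - s * q ≤ p * W := by
    have htri := norm_sub_norm_le ((ζ - w) * (1 - conj w * z)) ((z - w) * (1 - conj w * ζ))
    rw [← hiden, hn1, hn2, hnormWC] at htri
    exact htri
  have hpk1 : pker z θ = Z / p ^ 2 := rfl
  have hpk2 : pker w θ = W / q ^ 2 := rfl
  rw [hpk1, hpk2]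
  have hs0 : 0 ≤ s := norm_nonneg _
  clear_value d D s p q Z W
  clear hiden hWC hnormWC hn1 hn2 hpk1 hpk2 hp' hq' hζdef hDdef hsdef hpdef hqdef hZdef hWdef hddef
  have hsle : s ≤ D := by nlinarith [mul_pos hZ hW]
  have f2' : q * (D - s) ≤ p * W := by nlinarith [f2]
  have hq0 : 0 ≤ q * (D - s) := mul_nonneg hq.le (by linarith)
  have f3 : (q * (D - s)) ^ 2 ≤ (p * W) ^ 2 := by nlinarith [f2', hq0, mul_pos hp hW]
  have e1 : (1 - d) * D = D - s := by rw [sub_mul, one_mul, hdD]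
  have e2 : (1 + d) * D = D + s := by rw [add_mul, one_mul, hdD]
  have e3 : Z * W = (D - s) * (D + s) := by nlinarith [f1]
  have hgoal : (1 - d) * Z * q ^ 2 ≤ (1 + d) * W * p ^ 2 := by
    have hfin : (q * (D - s)) ^ 2 * ((D + s) * D) ≤ (p * W) ^ 2 * ((D + s) * D) := by
      apply mul_le_mul_of_nonneg_right f3
      exact mul_nonneg (by linarith) hD.le
    have eqL : (1 - d) * Z * q ^ 2 * (W * (D * D)) = (q * (D - s)) ^ 2 * ((D + s) * D) := by
      calc (1 - d) * Z * q ^ 2 * (W * (D * D))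
          = q ^ 2 * (Z * W) * (((1 - d) * D) * D) := by ring
      _ = q ^ 2 * ((D - s) * (D + s)) * ((D - s) * D) := by rw [e3, e1]
      _ = (q * (D - s)) ^ 2 * ((D + s) * D) := by ring
    have eqR : (1 + d) * W * p ^ 2 * (W * (D * D)) = (p * W) ^ 2 * ((D + s) * D) := by
      calc (1 + d) * W * p ^ 2 * (W * (D * D))
          = (p * W) ^ 2 * (((1 + d) * D) * D) := by ring
      _ = (p * W) ^ 2 * ((D + s) * D) := by rw [e2]
    have h := hfin
    rw [← eqL, ← eqR] at h
    exact le_of_mul_le_mul_right h (mul_pos hW (mul_pos hD hD))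
  calc (1 - d) * (Z / p ^ 2) = ((1 - d) * Z) / p ^ 2 := by ring
  _ ≤ ((1 + d) * W) / q ^ 2 := by
      rw [div_le_div_iff₀ (pow_pos hp 2) (pow_pos hq 2)]
      exact hgoal
  _ = (1 + d) * (W / q ^ 2) := by ring

end BQAux

namespace BQAux

/-- The key pointwise estimate: under the hypothesis, the Poisson kernel difference
is strictly less than `pker z0 θ / N`. -/
lemma key_bound {z0 zk wk : ℂ} (hz0 : ‖z0‖ < 1) (hzk : ‖zk‖ < 1) (hwk : ‖wk‖ < 1)
    {N : ℝ} (hN : 1 ≤ N)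
    (hc : pseudoDist zk wk ≤
      (1 - pseudoDist zk z0) * (1 - pseudoDist wk z0) / (4 * N)) (θ : ℝ) :
    pker wk θ - pker zk θ < pker z0 θ / N := by
  set ρ := pseudoDist zk wk with hρdef
  set ρ' := pseudoDist wk z0 with hρ'def
  set σ := pseudoDist zk z0 with hσdef
  have hρ0 : 0 ≤ ρ := pseudoDist_nonneg _ _
  have hρ'0 : 0 ≤ ρ' := pseudoDist_nonneg _ _
  have hρ'1 : ρ' < 1 := pseudoDist_lt_one hwk hz0
  have hσ0 : 0 ≤ σ := pseudoDist_nonneg _ _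
  have h1 : (1 - ρ) * pker wk θ ≤ (1 + ρ) * pker zk θ := by
    have := harnack hwk hzk θ
    rwa [← pseudoDist_comm zk wk, ← hρdef] at this
  have h2 : (1 - ρ') * pker wk θ ≤ (1 + ρ') * pker z0 θ := harnack hwk hz0 θ
  have hPw := (pker_pos hwk θ).le
  have hPzk := (pker_pos hzk θ).le
  have hPz0 := pker_pos hz0 θ
  have hNpos : 0 < N := by linarith
  have a1 : 4 * N * ρ ≤ 1 - ρ' := by
    have hbound : (1 - σ) * (1 - ρ') ≤ 1 - ρ' := by nlinarith
    have h4N : (0:ℝ) < 4 * N := by linarith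
    have h5 := mul_le_mul_of_nonneg_right hc h4N.le
    rw [div_mul_cancel₀ _ (ne_of_gt h4N)] at h5
    nlinarith [h5]
  have hA : (1 - 2 * ρ) * pker wk θ ≤ pker zk θ := by
    nlinarith [h1, mul_nonneg (mul_nonneg hρ0 hρ0) hPw]
  have hB : 4 * N * ρ * pker wk θ < 2 * pker z0 θ := by
    nlinarith [mul_le_mul_of_nonneg_right a1 hPw, h2]
  have hfin : N * (pker wk θ - pker zk θ) < pker z0 θ := by nlinarith [hA, hB]
  rw [lt_div_iff₀ hNpos]
  nlinarith [hfin]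

end BQAux


open BQAux

/-- if `d(z_k, w_k) ≤ (1 − d(z_k, z₀))(1 − d(w_k, z₀))/(4n)` for
`k = 1,…,n`, then the Blaschke quotient with zeros `z₀,…,z_n` and poles `w₁,…,w_n`
is a circle homeomorphism; if the inequality is strict for some `k`, it is a circle
diffeomorphism. -/
theorem pseudo_hyperbolic_blaschke_quotient
    (n : ℕ) (hn : 1 ≤ n) (z : Fin (n + 1) → ℂ) (w : Fin n → ℂ)
    (hz : ∀ k, ‖z k‖ < 1) (hw : ∀ k, ‖w k‖ < 1)
    (hcond : ∀ k : Fin n, pseudoDist (z k.succ) (w k) ≤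
      (1 - pseudoDist (z k.succ) (z 0)) * (1 - pseudoDist (w k) (z 0)) / (4 * n))
    (f : ℂ → ℂ)
    (hf : ∀ ζ : ℂ, f ζ = (∏ k, (ζ - z k) / (1 - conj (z k) * ζ)) *
                         (∏ k, (ζ - w k) / (1 - conj (w k) * ζ))⁻¹) :
    CirclePosHomeo f ∧
    ((∃ k : Fin n, pseudoDist (z k.succ) (w k) <
        (1 - pseudoDist (z k.succ) (z 0)) * (1 - pseudoDist (w k) (z 0)) / (4 * n)) →
      CirclePosDiffeo f) := by
  
  classical
  set F : ℝ → ℝ := fun θ =>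
    (∑ k : Fin (n + 1), blift (z k) θ) - ∑ k : Fin n, blift (w k) θ with hFdef
  set K : ℝ → ℝ := fun θ =>
    (∑ k : Fin (n + 1), pker (z k) θ) - ∑ k : Fin n, pker (w k) θ with hKdef
  have hderiv : ∀ θ, HasDerivAt F (K θ) θ := by
    intro θ
    apply HasDerivAt.sub
    · exact HasDerivAt.fun_sum fun k _ => hasDerivAt_blift (hz k) θ
    · exact HasDerivAt.fun_sum fun k _ => hasDerivAt_blift (hw k) θ
  have hN : (1 : ℝ) ≤ (n : ℝ) := by exact_mod_cast hn
  have hnpos : (0 : ℝ) < (n : ℝ) := by linarith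
  have hKpos : ∀ θ, 0 < K θ := by
    intro θ
    have hsumlt : ∑ k : Fin n, (pker (w k) θ - pker (z k.succ) θ)
        < ∑ _k : Fin n, pker (z 0) θ / (n : ℝ) := by
      apply Finset.sum_lt_sum_of_nonempty
      · exact Finset.univ_nonempty_iff.mpr (Fin.pos_iff_nonempty.mp hn)
      · intro k _
        exact key_bound (hz 0) (hz k.succ) (hw k) hN (by exact_mod_cast hcond k) θ
    have hsum_const : ∑ _k : Fin n, pker (z 0) θ / (n : ℝ) = pker (z 0) θ := by
      rw [Finset.sum_const, Finset.card_univ, Fintype.card_fin, nsmul_eq_mul]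
      field_simp
    have hsplit : ∑ k : Fin (n + 1), pker (z k) θ
        = pker (z 0) θ + ∑ k : Fin n, pker (z k.succ) θ := Fin.sum_univ_succ _
    have hsub : ∑ k : Fin n, (pker (w k) θ - pker (z k.succ) θ)
        = ∑ k : Fin n, pker (w k) θ - ∑ k : Fin n, pker (z k.succ) θ :=
      Finset.sum_sub_distrib _ _
    have hKval : K θ = (∑ k : Fin (n + 1), pker (z k) θ) - ∑ k : Fin n, pker (w k) θ := rfl
    rw [hKval, hsplit]
    rw [hsum_const] at hsumlt
    rw [hsub] at hsumlt
    linarith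
  have hFdiff : Differentiable ℝ F := fun θ => (hderiv θ).differentiableAt
  have hFderiv : deriv F = K := funext fun θ => (hderiv θ).deriv
  have hKcont : Continuous K := by
    apply Continuous.sub
    · exact continuous_finset_sum _ fun k _ => continuous_pker (hz k)
    · exact continuous_finset_sum _ fun k _ => continuous_pker (hw k)
  have hmono : StrictMono F := strictMono_of_hasDerivAt_pos hderiv hKpos
  have hper : ∀ θ, F (θ + 2 * Real.pi) = F θ + 2 * Real.pi := by
    intro θ
    have h1 : ∀ a : ℂ, blift a (θ + 2 * Real.pi) = blift a θ + 2 * Real.pi :=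
      fun a => blift_period a θ
    simp only [hFdef, h1, Finset.sum_add_distrib, Finset.sum_const, Finset.card_univ,
      Fintype.card_fin, nsmul_eq_mul]
    push_cast
    ring
  have hexp : ∀ θ : ℝ, f (Complex.exp (θ * Complex.I)) = Complex.exp (F θ * Complex.I) := by
    intro θ
    rw [hf]
    have hFv : ((F θ : ℝ) : ℂ) * Complex.I
        = (∑ k : Fin (n + 1), ((blift (z k) θ : ℝ) : ℂ) * Complex.I)
          - ∑ k : Fin n, ((blift (w k) θ : ℝ) : ℂ) * Complex.I := by
      rw [hFdef]
      push_cast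
      rw [sub_mul, Finset.sum_mul, Finset.sum_mul]
    rw [hFv, Complex.exp_sub, Complex.exp_sum, Complex.exp_sum]
    rw [div_eq_mul_inv]
    congr 1
    · exact Finset.prod_congr rfl fun k _ => (exp_blift (hz k) θ).symm
    · congr 1
      exact Finset.prod_congr rfl fun k _ => (exp_blift (hw k) θ).symm
  constructor
  · exact ⟨F, hFdiff.continuous, hmono, hper, hexp⟩
  · intro _
    refine ⟨F, ?_, ?_, hper, hexp⟩
    · rw [contDiff_one_iff_deriv]
      exact ⟨hFdiff, by rw [hFderiv]; exact hKcont⟩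
    · intro θ
      rw [hFderiv]
      exact hKpos θ
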